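/- There exist d₁ > 0 and d₂ > 0 such that for every λ in the domain D of R with −d₁ < Re λ < d₂, one has Re R(λ) < 0. -/

import Mathlib

open MeasureTheory

/-- The discrete (pole) part of the reduced Evans-function expression. -/
noncomputable def Rd (z : ℂ) : ℂ :=
  (6075 * (Real.pi : ℂ) ^ 2 / 8192) * (z - 5 / 4)⁻¹
    - (81 * (Real.pi : ℂ) ^ 2 / 8192) * (z + 3 / 4)⁻¹

/-- The continuous-spectrum part of the reduced Evans-function expression. -/
noncomputable def Rc (z : ℂ) : ℂ :=
  ∫ κ in Set.Ioi (1 : ℝ),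
    (((9 * Real.pi ^ 2 / 16) * κ ^ 4 * (1 + κ ^ 2) ^ 2 /
        ((κ ^ 2 + 9 / 4) * (κ ^ 2 + 1 / 4)) *
        (1 / Real.sinh (Real.pi * κ)) ^ 2 : ℝ) : ℂ) * (z + (κ : ℂ) ^ 2 + 1)⁻¹

/-- The full function `R = R_d + R_c`. -/
noncomputable def R (z : ℂ) : ℂ := Rd z + Rc z

/-- The domain `D = ℂ \ ({5/4, -3/4} ∪ (-∞, -2])`. -/
def Dom : Set ℂ :=
  {z | z ≠ 5 / 4 ∧ z ≠ -3 / 4 ∧ ¬(z.im = 0 ∧ z.re ≤ -2)}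

/-- `z` is a solution of the reduced eigenvalue equation
`α + β √(1 + z + ℓ) = R z`, with `z ∈ D` and `1 + z + ℓ ∉ (-∞, 0]`,
where the square root is the principal complex square root. -/
noncomputable def IsSolution (α β ℓ : ℝ) (z : ℂ) : Prop :=
  z ∈ Dom ∧ ¬((1 + z + (ℓ : ℂ)).im = 0 ∧ (1 + z + (ℓ : ℂ)).re ≤ 0) ∧
    (α : ℂ) + (β : ℂ) * (1 + z + (ℓ : ℂ)) ^ ((1 : ℂ) / 2) = R z

/-- The real coefficient appearing in the integrand of `Rc`. -/
noncomputable def cr (κ : ℝ) : ℝ :=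
  (9 * Real.pi ^ 2 / 16) * κ ^ 4 * (1 + κ ^ 2) ^ 2 /
    ((κ ^ 2 + 9 / 4) * (κ ^ 2 + 1 / 4)) * (1 / Real.sinh (Real.pi * κ)) ^ 2

lemma cr_nonneg (κ : ℝ) : 0 ≤ cr κ := by
  unfold cr; positivity

lemma pisq_le : Real.pi ^ 2 ≤ 10 := by nlinarith [Real.pi_pos, Real.pi_lt_d2]

lemma pisq_ge : 9 ≤ Real.pi ^ 2 := by nlinarith [Real.pi_gt_three]

set_option maxHeartbeats 1000000 in
lemma cr_mul_le {κ : ℝ} (hκ : 1 ≤ κ) :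
    cr κ * (κ ^ 2 + 9 / 4) ≤ 1056 * Real.exp (-(4 * κ)) := by
  have hπ3 := Real.pi_gt_three
  have hπ4 := Real.pi_lt_d2
  set E := Real.exp κ with hE
  have hEpos : 0 < E := Real.exp_pos κ
  have hE1 : (2.7182818283 : ℝ) < E :=
    lt_of_lt_of_le Real.exp_one_gt_d9 (Real.exp_le_exp.mpr hκ)
  have hexp2 : Real.exp (2 * κ) = E ^ 2 := by
    have := Real.exp_nat_mul κ 2; norm_num at this; exact this
  have hexp3 : Real.exp (3 * κ) = E ^ 3 := by
    have := Real.exp_nat_mul κ 3; norm_num at this; exact this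
  have hexp4 : Real.exp (4 * κ) = E ^ 4 := by
    have := Real.exp_nat_mul κ 4; norm_num at this; exact this
  have h6 : κ ^ 6 ≤ 11.25 * E ^ 2 := by
    have h := Real.pow_div_factorial_le_exp (x := 2 * κ) (by positivity) 6
    rw [hexp2] at h
    norm_num [Nat.factorial] at h
    ring_nf at h ⊢
    linarith
  have hE2 : (7.38 : ℝ) ≤ E ^ 2 := by nlinarith
  have hE3 : (20 : ℝ) ≤ E ^ 3 := by nlinarith
  have hS : 0.49 * E ^ 3 ≤ Real.sinh (Real.pi * κ) := by
    have hmono : Real.sinh (3 * κ) ≤ Real.sinh (Real.pi * κ) :=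
      Real.sinh_le_sinh.mpr (by nlinarith)
    have h3 : Real.sinh (3 * κ) = (E ^ 3 - (E ^ 3)⁻¹) / 2 := by
      rw [Real.sinh_eq, Real.exp_neg, hexp3]
    have hinv : (E ^ 3)⁻¹ ≤ 0.02 * E ^ 3 := by
      have h1 : (E ^ 3)⁻¹ ≤ (20 : ℝ)⁻¹ := by gcongr
      have : (0.02 : ℝ) * 20 ≤ 0.02 * E ^ 3 := by nlinarith
      nlinarith
    have : 0.49 * E ^ 3 ≤ Real.sinh (3 * κ) := by rw [h3]; linarith
    linarith
  have hSpos : 0 < Real.sinh (Real.pi * κ) := by nlinarith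
  have hcsch : (1 / Real.sinh (Real.pi * κ)) ^ 2 ≤ 4.17 / E ^ 6 := by
    rw [div_pow, div_le_div_iff₀ (by positivity) (by positivity)]
    nlinarith [hS, pow_pos hEpos 3, hSpos]
  have hA : cr κ * (κ ^ 2 + 9 / 4) =
      9 * Real.pi ^ 2 / 16 * (κ ^ 4 * (1 + κ ^ 2) ^ 2 / (κ ^ 2 + 1 / 4)) *
        (1 / Real.sinh (Real.pi * κ)) ^ 2 := by
    unfold cr; field_simp
  have hpoly : κ ^ 4 * (1 + κ ^ 2) ^ 2 / (κ ^ 2 + 1 / 4) ≤ 4 * κ ^ 6 := by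
    rw [div_le_iff₀ (by positivity)]
    have hab : κ ^ 4 ≤ κ ^ 6 := pow_le_pow_right₀ hκ (by norm_num)
    have hbc : κ ^ 6 ≤ κ ^ 8 := pow_le_pow_right₀ hκ (by norm_num)
    nlinarith [hab, hbc]
  have hexpneg : Real.exp (-(4 * κ)) = (E ^ 4)⁻¹ := by rw [Real.exp_neg, hexp4]
  calc cr κ * (κ ^ 2 + 9 / 4)
      = 9 * Real.pi ^ 2 / 16 * (κ ^ 4 * (1 + κ ^ 2) ^ 2 / (κ ^ 2 + 1 / 4)) *
          (1 / Real.sinh (Real.pi * κ)) ^ 2 := hA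
    _ ≤ 9 * 10 / 16 * (4 * κ ^ 6) * (4.17 / E ^ 6) := by
        have s1 : 9 * Real.pi ^ 2 / 16 ≤ 9 * 10 / 16 := by linarith [pisq_le]
        exact mul_le_mul (mul_le_mul s1 hpoly (by positivity) (by positivity)) hcsch
          (by positivity) (by positivity)
    _ ≤ 1056 * Real.exp (-(4 * κ)) := by
        rw [hexpneg]
        have h1 : 9 * 10 / 16 * (4 * κ ^ 6) * (4.17 / E ^ 6) =
            (93.825 * κ ^ 6) / E ^ 6 := by ring
        have h2 : (1056 : ℝ) * (E ^ 4)⁻¹ = 1056 / E ^ 4 := by ring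
        rw [h1, h2, div_le_div_iff₀ (by positivity) (by positivity)]
        have key : κ ^ 6 * E ^ 4 ≤ 11.25 * E ^ 6 := by
          have h := mul_le_mul_of_nonneg_right h6 (le_of_lt (pow_pos hEpos 4))
          ring_nf at h ⊢
          linarith
        have h66 : (0:ℝ) ≤ E ^ 6 := by positivity
        linarith [key, h66]

lemma cr_le {κ : ℝ} (hκ : 1 ≤ κ) : cr κ ≤ 1056 * Real.exp (-(4 * κ)) := by
  have h1 : cr κ ≤ cr κ * (κ ^ 2 + 9 / 4) :=
    le_mul_of_one_le_right (cr_nonneg κ) (by nlinarith)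
  exact h1.trans (cr_mul_le hκ)

set_option maxHeartbeats 1000000 in
/-- There exist `d₁ > 0`, `d₂ > 0` such that `Re R(λ) < 0` whenever `λ ∈ D`
and `-d₁ < Re λ < d₂`. -/
theorem stmt9 :
    ∃ d₁ d₂ : ℝ, 0 < d₁ ∧ 0 < d₂ ∧
      ∀ z : ℂ, z ∈ Dom → -d₁ < z.re → z.re < d₂ → (R z).re < 0 := by
  refine ⟨1/4, 1/4, by norm_num, by norm_num, fun z hz hx1 hx2 => ?_⟩
  set x := z.re with hxdef
  set y := z.im with hydef
  have hD : (0:ℝ) < (x - 5/4)^2 + y^2 := by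
    nlinarith [sq_nonneg y, mul_pos (show (0:ℝ) < 5/4 - x by linarith)
      (show (0:ℝ) < 5/4 - x by linarith)]
  -- the Rd bound
  have h54 : (5/4 : ℂ) = ((5/4 : ℝ) : ℂ) := by norm_num
  have h34 : (3/4 : ℂ) = ((3/4 : ℝ) : ℂ) := by norm_num
  have hC1 : (6075 * (Real.pi:ℂ)^2 / 8192) = ((6075 * Real.pi^2 / 8192 : ℝ) : ℂ) := by
    push_cast; ring
  have hC2 : (81 * (Real.pi:ℂ)^2 / 8192) = ((81 * Real.pi^2 / 8192 : ℝ) : ℂ) := by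
    push_cast; ring
  have e1 : ((z - 5/4)⁻¹).re = (x - 5/4) / ((x - 5/4)^2 + y^2) := by
    rw [h54, Complex.inv_re, Complex.normSq_apply]
    simp only [Complex.sub_re, Complex.sub_im, Complex.ofReal_re, Complex.ofReal_im, sub_zero]
    rw [← hxdef, ← hydef]
    congr 1
    ring
  have e2 : 0 ≤ ((z + 3/4)⁻¹).re := by
    rw [Complex.inv_re]
    apply div_nonneg _ (Complex.normSq_nonneg _)
    rw [h34]
    simp only [Complex.add_re, Complex.ofReal_re]
    linarith
  have hRdre : (Rd z).re = (6075 * Real.pi^2 / 8192) * ((z - 5/4)⁻¹).re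
      - (81 * Real.pi^2 / 8192) * ((z + 3/4)⁻¹).re := by
    rw [Rd, hC1, hC2, Complex.sub_re, Complex.re_ofReal_mul, Complex.re_ofReal_mul]
  have hRd : (Rd z).re ≤ -6 / ((x - 5/4)^2 + y^2) := by
    rw [hRdre, e1]
    have t2 : 0 ≤ (81 * Real.pi^2 / 8192) * ((z + 3/4)⁻¹).re :=
      mul_nonneg (by positivity) e2
    have t1 : (6075 * Real.pi^2 / 8192) * ((x - 5/4) / ((x - 5/4)^2 + y^2))
        ≤ -6 / ((x - 5/4)^2 + y^2) := by
      rw [← mul_div_assoc, div_le_div_iff_of_pos_right hD]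
      have hp := mul_le_mul_of_nonneg_left (show x - 5/4 ≤ -1 by linarith)
        (show (0:ℝ) ≤ 6075 * Real.pi^2 / 8192 by positivity)
      have := pisq_ge
      nlinarith
    linarith
  -- the Rc bound
  have hwre : ∀ κ : ℝ, (z + (κ:ℂ)^2 + 1).re = x + κ^2 + 1 := by
    intro κ
    have hcast : ((κ:ℂ)^2) = ((κ^2 : ℝ) : ℂ) := by push_cast; ring
    rw [Complex.add_re, Complex.add_re, hcast, Complex.ofReal_re, Complex.one_re]
  have hwim : ∀ κ : ℝ, (z + (κ:ℂ)^2 + 1).im = y := by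
    intro κ
    have hcast : ((κ:ℂ)^2) = ((κ^2 : ℝ) : ℂ) := by push_cast; ring
    rw [Complex.add_im, Complex.add_im, hcast, Complex.ofReal_im, Complex.one_im,
      add_zero, add_zero]
  have hg_int : IntegrableOn (fun κ : ℝ => 1056 * Real.exp (-(4 * κ))) (Set.Ioi 1) := by
    have h := (exp_neg_integrableOn_Ioi 1 (by norm_num : (0:ℝ) < 4)).const_mul (1056:ℝ)
    simpa [neg_mul, IntegrableOn] using h
  have hmeas : AEStronglyMeasurable (fun κ : ℝ => ((cr κ : ℝ) : ℂ) * (z + (κ:ℂ)^2 + 1)⁻¹)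
      (volume.restrict (Set.Ioi 1)) := by
    apply Measurable.aestronglyMeasurable
    apply Measurable.mul
    · exact Complex.measurable_ofReal.comp (by unfold cr; fun_prop)
    · fun_prop
  have hnorm : ∀ κ ∈ Set.Ioi (1:ℝ),
      ‖((cr κ : ℝ):ℂ) * (z + (κ:ℂ)^2 + 1)⁻¹‖ ≤ 1056 * Real.exp (-(4*κ)) := by
    intro κ hκ
    have hκ1 : (1:ℝ) ≤ κ := le_of_lt hκ
    have habs : (1:ℝ) ≤ ‖z + (κ:ℂ)^2 + 1‖ := by
      have h1 : (1:ℝ) ≤ (z + (κ:ℂ)^2 + 1).re := by rw [hwre]; nlinarith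
      calc (1:ℝ) ≤ (z + (κ:ℂ)^2 + 1).re := h1
        _ ≤ |(z + (κ:ℂ)^2 + 1).re| := le_abs_self _
        _ ≤ ‖z + (κ:ℂ)^2 + 1‖ := Complex.abs_re_le_norm _
    rw [norm_mul, norm_inv, Complex.norm_real, Real.norm_eq_abs, abs_of_nonneg (cr_nonneg κ)]
    calc cr κ * ‖z + (κ:ℂ)^2 + 1‖⁻¹ ≤ cr κ * 1 :=
          mul_le_mul_of_nonneg_left (inv_le_one_of_one_le₀ habs) (cr_nonneg κ)
      _ = cr κ := mul_one _
      _ ≤ 1056 * Real.exp (-(4*κ)) := cr_le hκ1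
  have hf_int : IntegrableOn (fun κ : ℝ => ((cr κ : ℝ):ℂ) * (z + (κ:ℂ)^2 + 1)⁻¹)
      (Set.Ioi 1) := by
    refine Integrable.mono hg_int hmeas ?_
    refine (ae_restrict_mem measurableSet_Ioi).mono fun κ hκ => ?_
    rw [Real.norm_eq_abs, abs_of_nonneg (by positivity)]
    exact hnorm κ hκ
  have hRc : (Rc z).re ≤ 5 / ((x - 5/4)^2 + y^2) := by
    have hRceq : (Rc z).re = ∫ κ in Set.Ioi (1:ℝ),
        (((cr κ : ℝ):ℂ) * (z + (κ:ℂ)^2 + 1)⁻¹).re := by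
      have h := integral_re hf_int
      simp only [RCLike.re_to_complex] at h
      exact h.symm
    rw [hRceq]
    have hg2_int : IntegrableOn
        (fun κ : ℝ => (1056 / ((x - 5/4)^2 + y^2)) * Real.exp (-(4 * κ))) (Set.Ioi 1) := by
      have h := (exp_neg_integrableOn_Ioi 1 (by norm_num : (0:ℝ) < 4)).const_mul
        (1056 / ((x - 5/4)^2 + y^2))
      simpa [neg_mul, IntegrableOn] using h
    have hmono : ∫ κ in Set.Ioi (1:ℝ), (((cr κ : ℝ):ℂ) * (z + (κ:ℂ)^2 + 1)⁻¹).re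
        ≤ ∫ κ in Set.Ioi (1:ℝ), (1056 / ((x - 5/4)^2 + y^2)) * Real.exp (-(4*κ)) := by
      apply setIntegral_mono_on hf_int.re hg2_int measurableSet_Ioi
      intro κ hκ
      have hκ1 : (1:ℝ) ≤ κ := le_of_lt hκ
      have hκ2 : (1:ℝ) ≤ κ^2 := by nlinarith
      show (((cr κ : ℝ):ℂ) * (z + (κ:ℂ)^2 + 1)⁻¹).re
        ≤ 1056 / ((x - 5/4)^2 + y^2) * Real.exp (-(4*κ))
      rw [Complex.re_ofReal_mul, Complex.inv_re, Complex.normSq_apply, hwre, hwim]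
      have hfrac : (x + κ^2 + 1) / ((x + κ^2 + 1) * (x + κ^2 + 1) + y * y)
          ≤ (κ^2 + 9/4) / ((x - 5/4)^2 + y^2) := by
        apply div_le_div₀ (by positivity) (by linarith) hD
        nlinarith [mul_pos (show (0:ℝ) < κ^2 + 9/4 by positivity)
          (show (0:ℝ) < 2*x + κ^2 - 1/4 by nlinarith)]
      calc cr κ * ((x + κ^2 + 1) / ((x + κ^2 + 1) * (x + κ^2 + 1) + y * y))
          ≤ cr κ * ((κ^2 + 9/4) / ((x - 5/4)^2 + y^2)) :=
            mul_le_mul_of_nonneg_left hfrac (cr_nonneg κ)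
        _ = (cr κ * (κ^2 + 9/4)) / ((x - 5/4)^2 + y^2) := by ring
        _ ≤ (1056 * Real.exp (-(4*κ))) / ((x - 5/4)^2 + y^2) :=
            (div_le_div_iff_of_pos_right hD).mpr (cr_mul_le hκ1)
        _ = (1056 / ((x - 5/4)^2 + y^2)) * Real.exp (-(4*κ)) := by ring
    have hval : ∫ κ in Set.Ioi (1:ℝ), (1056 / ((x - 5/4)^2 + y^2)) * Real.exp (-(4*κ))
        = (1056 / ((x - 5/4)^2 + y^2)) * (Real.exp (-4) / 4) := by
      rw [MeasureTheory.integral_const_mul]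
      congr 1
      have h := integral_comp_mul_left_Ioi (fun u => Real.exp (-u)) 1
        (by norm_num : (0:ℝ) < 4)
      simp only [smul_eq_mul, mul_one] at h
      rw [h, integral_exp_neg_Ioi]
      ring
    have hexp4 : Real.exp (-(4:ℝ)) ≤ 1/54 := by
      have h4 : (54:ℝ) ≤ Real.exp 4 := by
        have h : Real.exp 4 = Real.exp 1 ^ 4 := by
          rw [show (4:ℝ) = ((4:ℕ):ℝ) * 1 by norm_num, Real.exp_nat_mul]
        rw [h]
        have h2 : (7.389:ℝ) ≤ Real.exp 1 ^ 2 := by nlinarith [Real.exp_one_gt_d9]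
        nlinarith [h2]
      rw [Real.exp_neg]
      calc (Real.exp 4)⁻¹ ≤ (54:ℝ)⁻¹ := by gcongr
        _ ≤ 1/54 := by norm_num
    have h5 : 1056 * (Real.exp (-4) / 4) ≤ 5 := by
      nlinarith [hexp4, Real.exp_pos (-4:ℝ)]
    have hfinal : (1056 / ((x - 5/4)^2 + y^2)) * (Real.exp (-4) / 4)
        ≤ 5 / ((x - 5/4)^2 + y^2) := by
      rw [div_mul_eq_mul_div, div_le_div_iff_of_pos_right hD]
      linarith [h5]
    calc (∫ κ in Set.Ioi (1:ℝ), (((cr κ : ℝ):ℂ) * (z + (κ:ℂ)^2 + 1)⁻¹).re) ≤ _ := hmono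
      _ = _ := hval
      _ ≤ 5 / ((x - 5/4)^2 + y^2) := hfinal
  -- conclusion
  have hsum : (R z).re = (Rd z).re + (Rc z).re := by rw [R, Complex.add_re]
  have hpos : (0:ℝ) < 1 / ((x - 5/4)^2 + y^2) := by positivity
  have hring : -6 / ((x - 5/4)^2 + y^2) + 5 / ((x - 5/4)^2 + y^2)
      = -(1 / ((x - 5/4)^2 + y^2)) := by ring
  rw [hsum]
  linarith
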